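/- (Stability of diffusion Fréchet functions) Let α and β be Borel probability measures on ℝ^d with finite first moment, let t > 0, and let μ be any coupling of α and β (a Borel probability measure on ℝ^d × ℝ^d whose first and second marginals are α and β). Then for every x ∈ ℝ^d, |V_{α,t}(x) - V_{β,t}(x)| ≤ (1/(C_d(2t)√(te))) ∫_{ℝ^d×ℝ^d} ‖z₁ - z₂‖ dμ(z₁,z₂). In particular, ‖V_{α,t} - V_{β,t}‖_∞ ≤ (1/(C_d(2t)√(te))) W₁(α,β), where W₁ is the 1-Wasserstein distance. -/

import Mathlib

open MeasureTheory Real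

/-- The Gaussian heat kernel `G_t(x,y) = (4πt)^{-d/2} exp(-‖y-x‖²/(4t))` on `ℝ^d`. -/
noncomputable def heatKernel (d : ℕ) (t : ℝ) (x y : EuclideanSpace ℝ (Fin d)) : ℝ :=
  ((4 * Real.pi * t) ^ ((d : ℝ) / 2))⁻¹ * Real.exp (-‖y - x‖ ^ 2 / (4 * t))

/-- The squared diffusion distance `d_t²(x₁,x₂) = ‖G_t(x₁,·) - G_t(x₂,·)‖²_{L²}`. -/
noncomputable def diffusionDistSq (d : ℕ) (t : ℝ) (x₁ x₂ : EuclideanSpace ℝ (Fin d)) : ℝ :=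
  ∫ y : EuclideanSpace ℝ (Fin d), (heatKernel d t x₁ y - heatKernel d t x₂ y) ^ 2

/-- The diffusion Fréchet function `V_{α,t}(x) = ∫ d_t²(y,x) dα(y)`. -/
noncomputable def frechetFn (d : ℕ) (t : ℝ) (α : Measure (EuclideanSpace ℝ (Fin d)))
    (x : EuclideanSpace ℝ (Fin d)) : ℝ :=
  ∫ y, diffusionDistSq d t y x ∂α

lemma heat_prod_eq (d : ℕ) {t : ℝ} (ht : 0 < t) (a b y : EuclideanSpace ℝ (Fin d)) :
    heatKernel d t a y * heatKernel d t b y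
      = (((4 * Real.pi * t) ^ ((d:ℝ)/2))⁻¹)^2 * Real.exp (-‖a - b‖^2 / (8*t))
        * Real.exp (-(1/(2*t)) * ‖y - (2:ℝ)⁻¹ • (a + b)‖^2) := by
  unfold heatKernel
  have par : ∀ u w : EuclideanSpace ℝ (Fin d),
      ‖u + w‖^2 + ‖u - w‖^2 = 2*‖u‖^2 + 2*‖w‖^2 := fun u w => by
    rw [norm_add_sq_real, norm_sub_sq_real]; ring
  have key : ‖y - a‖^2 + ‖y - b‖^2
      = 2 * ‖y - (2:ℝ)⁻¹ • (a + b)‖^2 + ‖a - b‖^2 / 2 := by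
    have h1 : y - a = (y - (2:ℝ)⁻¹ • (a + b)) + (2:ℝ)⁻¹ • (b - a) := by module
    have h2 : y - b = (y - (2:ℝ)⁻¹ • (a + b)) - (2:ℝ)⁻¹ • (b - a) := by module
    have hw : ‖(2:ℝ)⁻¹ • (b - a)‖^2 = ‖a - b‖^2 / 4 := by
      rw [norm_smul, norm_sub_rev, mul_pow]
      norm_num
      ring
    have := par (y - (2:ℝ)⁻¹ • (a + b)) ((2:ℝ)⁻¹ • (b - a))
    rw [← h1, ← h2, hw] at this
    linarith
  rw [mul_mul_mul_comm, ← Real.exp_add, ← pow_two]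
  conv_rhs => rw [mul_assoc, ← Real.exp_add]
  congr 1
  congr 1
  set A := ‖y - a‖^2; set B := ‖y - b‖^2
  set C := ‖a - b‖^2; set U := ‖y - (2:ℝ)⁻¹ • (a + b)‖^2
  have ht' : t ≠ 0 := ht.ne'
  field_simp
  linear_combination (-16) * key

lemma integrable_gauss (d : ℕ) {b : ℝ} (hb : 0 < b) (m : EuclideanSpace ℝ (Fin d)) :
    Integrable (fun y : EuclideanSpace ℝ (Fin d) => Real.exp (-b * ‖y - m‖^2)) := by
  have h : Integrable (fun y : EuclideanSpace ℝ (Fin d) => Real.exp (-b * ‖y‖^2)) := by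
    have h0 := (GaussianFourier.integrable_cexp_neg_mul_sq_norm_add (V := EuclideanSpace ℝ (Fin d))
      (b := (b : ℂ)) (by simpa using hb) 0 0).norm
    convert h0 using 2 with v
    rw [Complex.norm_exp]
    norm_num
    left
    norm_cast
  exact h.comp_sub_right m

lemma heat_prod_integral (d : ℕ) {t : ℝ} (ht : 0 < t) (a b : EuclideanSpace ℝ (Fin d)) :
    ∫ y, heatKernel d t a y * heatKernel d t b y
      = ((8 * Real.pi * t) ^ ((d:ℝ)/2))⁻¹ * Real.exp (-‖a - b‖^2 / (8*t)) := by
  have hb2 : (0:ℝ) < 1/(2*t) := by positivity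
  simp_rw [heat_prod_eq d ht a b]
  rw [integral_const_mul, integral_sub_right_eq_self
    (fun y : EuclideanSpace ℝ (Fin d) => Real.exp (-(1/(2*t)) * ‖y‖^2)) ((2:ℝ)⁻¹ • (a + b)),
    GaussianFourier.integral_rexp_neg_mul_sq_norm hb2, finrank_euclideanSpace_fin]
  have hdiv : Real.pi / (1/(2*t)) = 2*Real.pi*t := by
    field_simp
  rw [hdiv]
  set c := (d:ℝ)/2 with hc
  have h4 : (0:ℝ) < 4*Real.pi*t := by positivity
  have h2 : (0:ℝ) < 2*Real.pi*t := by positivity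
  have h8 : (0:ℝ) < 8*Real.pi*t := by positivity
  rw [mul_assoc, mul_comm (Real.exp _) _, ← mul_assoc, pow_two,
    ← Real.inv_rpow h4.le, ← Real.mul_rpow (by positivity) (by positivity),
    ← Real.mul_rpow (by positivity) (by positivity), ← Real.inv_rpow h8.le]
  congr 2
  field_simp
  ring

lemma integrable_heat_prod (d : ℕ) {t : ℝ} (ht : 0 < t) (a b : EuclideanSpace ℝ (Fin d)) :
    Integrable (fun y => heatKernel d t a y * heatKernel d t b y) := by
  simp_rw [heat_prod_eq d ht a b]
  exact (integrable_gauss d (show (0:ℝ) < 1/(2*t) by positivity) _).const_mul _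

lemma diffusionDistSq_eq (d : ℕ) {t : ℝ} (ht : 0 < t) (x₁ x₂ : EuclideanSpace ℝ (Fin d)) :
    diffusionDistSq d t x₁ x₂
      = 2 * ((8 * Real.pi * t) ^ ((d:ℝ)/2))⁻¹ * (1 - Real.exp (-‖x₁ - x₂‖^2 / (8*t))) := by
  unfold diffusionDistSq
  have expand : ∀ y, (heatKernel d t x₁ y - heatKernel d t x₂ y)^2
      = heatKernel d t x₁ y * heatKernel d t x₁ y
        - heatKernel d t x₁ y * heatKernel d t x₂ y
        - (heatKernel d t x₂ y * heatKernel d t x₁ y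
          - heatKernel d t x₂ y * heatKernel d t x₂ y) := fun y => by ring
  simp_rw [expand]
  have I1 : Integrable (fun y => heatKernel d t x₁ y * heatKernel d t x₁ y
      - heatKernel d t x₁ y * heatKernel d t x₂ y) volume :=
    (integrable_heat_prod d ht x₁ x₁).sub (integrable_heat_prod d ht x₁ x₂)
  have I2 : Integrable (fun y => heatKernel d t x₂ y * heatKernel d t x₁ y
      - heatKernel d t x₂ y * heatKernel d t x₂ y) volume :=
    (integrable_heat_prod d ht x₂ x₁).sub (integrable_heat_prod d ht x₂ x₂)
  rw [integral_sub I1 I2]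
  rw [integral_sub (integrable_heat_prod d ht x₁ x₁) (integrable_heat_prod d ht x₁ x₂),
    integral_sub (integrable_heat_prod d ht x₂ x₁) (integrable_heat_prod d ht x₂ x₂),
    heat_prod_integral d ht x₁ x₁, heat_prod_integral d ht x₁ x₂,
    heat_prod_integral d ht x₂ x₁, heat_prod_integral d ht x₂ x₂,
    norm_sub_rev x₂ x₁]
  simp [Real.exp_zero]
  ring

lemma exp_gauss_lip {t : ℝ} (ht : 0 < t) (s₁ s₂ : ℝ) :
    |Real.exp (-s₁^2/(8*t)) - Real.exp (-s₂^2/(8*t))|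
      ≤ (2 * Real.sqrt (t * Real.exp 1))⁻¹ * |s₁ - s₂| := by
  set K : ℝ := (2 * Real.sqrt (t * Real.exp 1))⁻¹ with hK
  set g : ℝ → ℝ := fun s => Real.exp (-s^2/(8*t)) with hg
  have hd : ∀ s : ℝ, HasDerivAt g (Real.exp (-s^2/(8*t)) * (-(2*s)/(8*t))) s := by
    intro s
    have h1 : HasDerivAt (fun s : ℝ => -s^2/(8*t)) (-(2*s)/(8*t)) s := by
      have := ((hasDerivAt_pow 2 s).neg).div_const (8*t)
      simpa using this
    exact h1.exp
  have hE : (0:ℝ) < Real.exp (2⁻¹) := Real.exp_pos _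
  have hr : (0:ℝ) < Real.sqrt t := Real.sqrt_pos.2 ht
  have hsq : Real.sqrt t ^ 2 = t := Real.sq_sqrt ht.le
  have hsrt : Real.sqrt (t * Real.exp 1) = Real.sqrt t * Real.exp 2⁻¹ := by
    rw [Real.sqrt_mul ht.le, ← Real.exp_half]
    norm_num
  have hbound : ∀ s : ℝ, ‖Real.exp (-s^2/(8*t)) * (-(2*s)/(8*t))‖ ≤ K := by
    intro s
    set u := |s| with hu
    have hu0 : 0 ≤ u := abs_nonneg s
    have hus : u^2 = s^2 := sq_abs s
    set X := Real.exp (s^2/(8*t)) with hX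
    have hX0 : 0 < X := Real.exp_pos _
    have hXinv : Real.exp (-s^2/(8*t)) = X⁻¹ := by
      rw [hX, ← Real.exp_neg]
      ring_nf
    have hXlow : Real.exp 2⁻¹ * (2⁻¹ + s^2/(8*t)) ≤ X := by
      have h1 : (s^2/(8*t) - 2⁻¹) + 1 ≤ Real.exp (s^2/(8*t) - 2⁻¹) :=
        Real.add_one_le_exp _
      have h2 : X = Real.exp 2⁻¹ * Real.exp (s^2/(8*t) - 2⁻¹) := by
        rw [← Real.exp_add, hX]
        congr 1
        ring
      rw [h2]
      have := mul_le_mul_of_nonneg_left h1 hE.le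
      calc Real.exp 2⁻¹ * (2⁻¹ + s^2/(8*t))
          = Real.exp 2⁻¹ * ((s^2/(8*t) - 2⁻¹) + 1) := by ring
        _ ≤ _ := this
    have hu4 : 4 * Real.sqrt t * u ≤ s^2 + 4*t := by
      nlinarith [sq_nonneg (u - 2*Real.sqrt t)]
    rw [norm_mul, Real.norm_eq_abs, Real.norm_eq_abs,
      abs_of_pos (Real.exp_pos _), abs_div, abs_neg]
    have habs2 : |2*s| = 2*u := by rw [abs_mul, hu]; norm_num
    have habs8 : |8*t| = 8*t := abs_of_pos (by linarith)
    rw [habs2, habs8, hXinv, hK, hsrt]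
    have hrw : X⁻¹ * (2*u/(8*t)) = (2*u) / (8*t*X) := by
      field_simp
    rw [hrw]
    rw [div_le_iff₀ (by positivity)]
    have key : 4 * Real.sqrt t * u * Real.exp 2⁻¹ ≤ 8*t*X := by
      have h3 : (s^2 + 4*t) * Real.exp 2⁻¹ ≤ 8*t*X := by
        have h4 := mul_le_mul_of_nonneg_left hXlow (show (0:ℝ) ≤ 8*t by linarith)
        have h5 : 8*t*(Real.exp 2⁻¹ * (2⁻¹ + s^2/(8*t))) = (s^2+4*t) * Real.exp 2⁻¹ := by
          field_simp
          ring
        linarith [h5 ▸ h4]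
      have h6 := mul_le_mul_of_nonneg_right hu4 hE.le
      linarith
    have h7 : (2*(Real.sqrt t * Real.exp 2⁻¹))⁻¹ * (4*Real.sqrt t*u*Real.exp 2⁻¹) = 2*u := by
      field_simp
      ring
    have h8 := mul_le_mul_of_nonneg_left key
      (inv_nonneg.2 (by positivity : (0:ℝ) ≤ 2*(Real.sqrt t * Real.exp 2⁻¹)))
    linarith [h7 ▸ h8]
  have lip := convex_univ.norm_image_sub_le_of_norm_deriv_le
    (f := g) (fun x _ => (hd x).differentiableAt)
    (fun x _ => by rw [(hd x).deriv]; exact hbound x)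
    (Set.mem_univ s₂) (Set.mem_univ s₁)
  simpa [Real.norm_eq_abs, hg] using lip

lemma diffusionDistSq_sub_bound (d : ℕ) {t : ℝ} (ht : 0 < t)
    (x y₁ y₂ : EuclideanSpace ℝ (Fin d)) :
    |diffusionDistSq d t y₁ x - diffusionDistSq d t y₂ x|
      ≤ 1 / ((8 * Real.pi * t) ^ ((d:ℝ)/2) * Real.sqrt (t * Real.exp 1)) * ‖y₁ - y₂‖ := by
  rw [diffusionDistSq_eq d ht, diffusionDistSq_eq d ht]
  set P := ((8 * Real.pi * t) ^ ((d:ℝ)/2))⁻¹ with hP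
  have hP0 : 0 < (8 * Real.pi * t) ^ ((d:ℝ)/2) := Real.rpow_pos_of_pos (by positivity) _
  have hPpos : 0 < P := by rw [hP]; positivity
  have hs : 0 < Real.sqrt (t * Real.exp 1) := Real.sqrt_pos.2 (by positivity)
  have h1 : 2 * P * (1 - Real.exp (-‖y₁-x‖^2/(8*t))) - 2 * P * (1 - Real.exp (-‖y₂-x‖^2/(8*t)))
      = 2 * P * (Real.exp (-‖y₂-x‖^2/(8*t)) - Real.exp (-‖y₁-x‖^2/(8*t))) := by ring
  rw [h1, abs_mul, abs_of_pos (by positivity : (0:ℝ) < 2 * P)]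
  have h2 := exp_gauss_lip ht ‖y₂ - x‖ ‖y₁ - x‖
  have h3 : |‖y₂ - x‖ - ‖y₁ - x‖| ≤ ‖y₁ - y₂‖ := by
    have h := abs_norm_sub_norm_le (y₂ - x) (y₁ - x)
    rw [show (y₂ - x) - (y₁ - x) = y₂ - y₁ by abel, norm_sub_rev y₂ y₁] at h
    exact h
  have hconst : 2 * P * (2 * Real.sqrt (t * Real.exp 1))⁻¹
      = 1 / ((8 * Real.pi * t) ^ ((d:ℝ)/2) * Real.sqrt (t * Real.exp 1)) := by
    rw [hP]
    field_simp
  calc 2 * P * |Real.exp (-‖y₂-x‖^2/(8*t)) - Real.exp (-‖y₁-x‖^2/(8*t))|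
      ≤ 2 * P * ((2 * Real.sqrt (t * Real.exp 1))⁻¹ * |‖y₂ - x‖ - ‖y₁ - x‖|) :=
        mul_le_mul_of_nonneg_left h2 (by positivity)
    _ = (2 * P * (2 * Real.sqrt (t * Real.exp 1))⁻¹) * |‖y₂ - x‖ - ‖y₁ - x‖| := by ring
    _ ≤ (2 * P * (2 * Real.sqrt (t * Real.exp 1))⁻¹) * ‖y₁ - y₂‖ :=
        mul_le_mul_of_nonneg_left h3 (by positivity)
    _ = _ := by rw [hconst]

/-- Stability of diffusion Fréchet functions: for probability measures `α, β` with finite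
first moment and any coupling `μ` of `α` and `β`,
`|V_{α,t}(x) - V_{β,t}(x)| ≤ (1/(C_d(2t)√(te))) ∫ ‖z₁ - z₂‖ dμ(z₁,z₂)` for every `x`;
in particular `‖V_{α,t} - V_{β,t}‖_∞ ≤ (1/(C_d(2t)√(te))) W₁(α,β)`. -/
theorem frechet_stability (d : ℕ) (t : ℝ) (ht : 0 < t)
    (α β : Measure (EuclideanSpace ℝ (Fin d)))
    [IsProbabilityMeasure α] [IsProbabilityMeasure β]
    (hα : Integrable (fun y => ‖y‖) α) (hβ : Integrable (fun y => ‖y‖) β)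
    (μ : Measure (EuclideanSpace ℝ (Fin d) × EuclideanSpace ℝ (Fin d)))
    [IsProbabilityMeasure μ]
    (hμ₁ : μ.map Prod.fst = α) (hμ₂ : μ.map Prod.snd = β)
    (x : EuclideanSpace ℝ (Fin d)) :
    |frechetFn d t α x - frechetFn d t β x| ≤
      1 / ((8 * Real.pi * t) ^ ((d : ℝ) / 2) * Real.sqrt (t * Real.exp 1)) *
        ∫ z, ‖z.1 - z.2‖ ∂μ := by
  set L : ℝ := 1 / ((8 * Real.pi * t) ^ ((d : ℝ) / 2) * Real.sqrt (t * Real.exp 1)) with hL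
  set f : EuclideanSpace ℝ (Fin d) → ℝ := fun y => diffusionDistSq d t y x with hf
  have hP0 : 0 < (8 * Real.pi * t) ^ ((d:ℝ)/2) := Real.rpow_pos_of_pos (by positivity) _
  have hf_cont : Continuous f := by
    have : f = fun y => 2 * ((8 * Real.pi * t) ^ ((d:ℝ)/2))⁻¹
        * (1 - Real.exp (-‖y - x‖^2 / (8*t))) :=
      funext fun y => diffusionDistSq_eq d ht y x
    rw [this]
    fun_prop
  have hf_bdd : ∀ y : EuclideanSpace ℝ (Fin d), ‖f y‖ ≤ 2 * ((8 * Real.pi * t) ^ ((d:ℝ)/2))⁻¹ := by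
    intro y
    rw [hf]
    simp only [Real.norm_eq_abs]
    rw [diffusionDistSq_eq d ht y x]
    have he1 : Real.exp (-‖y - x‖^2 / (8*t)) ≤ 1 := Real.exp_le_one_iff.2
      (div_nonpos_of_nonpos_of_nonneg (neg_nonpos.2 (by positivity)) (by positivity))
    have he0 : 0 < Real.exp (-‖y - x‖^2 / (8*t)) := Real.exp_pos _
    rw [abs_mul, abs_of_nonneg (by linarith : (0:ℝ) ≤ 1 - Real.exp (-‖y - x‖^2 / (8*t))),
      abs_of_pos (by positivity : (0:ℝ) < 2 * ((8 * Real.pi * t) ^ ((d:ℝ)/2))⁻¹)]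
    nlinarith [he0, (by positivity : (0:ℝ) < 2 * ((8 * Real.pi * t) ^ ((d:ℝ)/2))⁻¹)]
  have hf_int : ∀ (ν : Measure (EuclideanSpace ℝ (Fin d))) [IsProbabilityMeasure ν], Integrable f ν := by
    intro ν _
    exact (integrable_const (2 * ((8 * Real.pi * t) ^ ((d:ℝ)/2))⁻¹)).mono'
      hf_cont.aestronglyMeasurable (ae_of_all _ hf_bdd)
  have hA : frechetFn d t α x = ∫ z : EuclideanSpace ℝ (Fin d) × EuclideanSpace ℝ (Fin d), f z.1 ∂μ := by
    rw [frechetFn, ← hμ₁,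
      integral_map measurable_fst.aemeasurable hf_cont.aestronglyMeasurable]
  have hB : frechetFn d t β x = ∫ z : EuclideanSpace ℝ (Fin d) × EuclideanSpace ℝ (Fin d), f z.2 ∂μ := by
    rw [frechetFn, ← hμ₂,
      integral_map measurable_snd.aemeasurable hf_cont.aestronglyMeasurable]
  have hint1 : Integrable (fun z : EuclideanSpace ℝ (Fin d) × EuclideanSpace ℝ (Fin d) => f z.1) μ := by
    have := hf_int α
    rw [← hμ₁] at this
    exact (integrable_map_measure hf_cont.aestronglyMeasurable
      measurable_fst.aemeasurable).mp this
  have hint2 : Integrable (fun z : EuclideanSpace ℝ (Fin d) × EuclideanSpace ℝ (Fin d) => f z.2) μ := by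
    have := hf_int β
    rw [← hμ₂] at this
    exact (integrable_map_measure hf_cont.aestronglyMeasurable
      measurable_snd.aemeasurable).mp this
  have hn1 : Integrable (fun z : EuclideanSpace ℝ (Fin d) × EuclideanSpace ℝ (Fin d) => ‖z.1‖) μ := by
    rw [← hμ₁] at hα
    exact (integrable_map_measure continuous_norm.aestronglyMeasurable
      measurable_fst.aemeasurable).mp hα
  have hn2 : Integrable (fun z : EuclideanSpace ℝ (Fin d) × EuclideanSpace ℝ (Fin d) => ‖z.2‖) μ := by
    rw [← hμ₂] at hβ
    exact (integrable_map_measure continuous_norm.aestronglyMeasurable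
      measurable_snd.aemeasurable).mp hβ
  have hnint : Integrable (fun z : EuclideanSpace ℝ (Fin d) × EuclideanSpace ℝ (Fin d) => ‖z.1 - z.2‖) μ := by
    refine (hn1.add hn2).mono'
      ((continuous_fst.sub continuous_snd).norm.aestronglyMeasurable) (ae_of_all _ ?_)
    intro z
    rw [Real.norm_eq_abs, abs_of_nonneg (norm_nonneg _)]
    exact norm_sub_le _ _
  rw [hA, hB, ← integral_sub hint1 hint2]
  calc |∫ z : EuclideanSpace ℝ (Fin d) × EuclideanSpace ℝ (Fin d), (f z.1 - f z.2) ∂μ|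
      ≤ ∫ z : EuclideanSpace ℝ (Fin d) × EuclideanSpace ℝ (Fin d), |f z.1 - f z.2| ∂μ := by
        simpa [Real.norm_eq_abs] using norm_integral_le_integral_norm
          (μ := μ) (fun z : EuclideanSpace ℝ (Fin d) × EuclideanSpace ℝ (Fin d) => f z.1 - f z.2)
    _ ≤ ∫ z : EuclideanSpace ℝ (Fin d) × EuclideanSpace ℝ (Fin d), L * ‖z.1 - z.2‖ ∂μ := by
        refine integral_mono (hint1.sub hint2).abs (hnint.const_mul L) ?_
        intro z
        exact diffusionDistSq_sub_bound d ht x z.1 z.2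
    _ = L * ∫ z : EuclideanSpace ℝ (Fin d) × EuclideanSpace ℝ (Fin d), ‖z.1 - z.2‖ ∂μ := integral_const_mul L _
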